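/- Let F, G be cumulative distribution functions on ℝ of absolutely continuous distributions whose densities are both bounded by g_max, and suppose the L¹ distance ∫|F(s) − G(s)| ds ≤ W. Then for every τ ∈ ℝ, |F(τ) − G(τ)| ≤ √(2·g_max·W). -/

import Mathlib

open MeasureTheory Real

/-- Wasserstein-to-Kolmogorov bound: if `F, G` are CDFs of absolutely
continuous distributions with densities `f, g` bounded by `gmax`, and the
`L¹` distance of the CDFs is at most `W`, then every pointwise CDF gap is at
most `√(2 gmax W)`. -/
theorem wasserstein_to_kolmogorov
    (f g : ℝ → ℝ) (gmax W : ℝ) (hgmax : 0 ≤ gmax) (hW : 0 ≤ W)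
    (hf0 : ∀ s, 0 ≤ f s) (hg0 : ∀ s, 0 ≤ g s)
    (hfb : ∀ s, f s ≤ gmax) (hgb : ∀ s, g s ≤ gmax)
    (hfint : Integrable f) (hgint : Integrable g)
    (F G : ℝ → ℝ)
    (hF : ∀ τ, F τ = ∫ s in Set.Iic τ, f s)
    (hG : ∀ τ, G τ = ∫ s in Set.Iic τ, g s)
    (hFGint : Integrable (fun s => |F s - G s|))
    (hL1 : ∫ s, |F s - G s| ≤ W) :
    ∀ τ : ℝ, |F τ - G τ| ≤ sqrt (2 * gmax * W) := by
  intro τ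
  set a := |F τ - G τ| with ha
  by_cases hgm0 : gmax = 0
  · have hf' : ∀ s, f s = 0 := fun s => le_antisymm (hgm0 ▸ hfb s) (hf0 s)
    have hg' : ∀ s, g s = 0 := fun s => le_antisymm (hgm0 ▸ hgb s) (hg0 s)
    have hFG : F τ = G τ := by simp [hF, hG, hf', hg']
    simp [ha, hFG, Real.sqrt_nonneg]
  have hgm : 0 < gmax := lt_of_le_of_ne hgmax (Ne.symm hgm0)
  rcases eq_or_lt_of_le (abs_nonneg (F τ - G τ)) with h0 | h0
  · rw [ha, ← h0]; exact Real.sqrt_nonneg _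
  set h := a / gmax with hh
  have hhpos : 0 < h := div_pos h0 hgm
  -- Lipschitz-type lower bound for s ≥ τ
  have key : ∀ s, τ ≤ s → a - gmax * (s - τ) ≤ |F s - G s| := by
    intro s hs
    have hFs : F s - F τ = ∫ x in τ..s, f x := by
      rw [hF, hF, intervalIntegral.integral_Iic_sub_Iic hfint.integrableOn hfint.integrableOn]
    have hGs : G s - G τ = ∫ x in τ..s, g x := by
      rw [hG, hG, intervalIntegral.integral_Iic_sub_Iic hgint.integrableOn hgint.integrableOn]
    have hdiff : (F s - G s) - (F τ - G τ) = ∫ x in τ..s, (f x - g x) := by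
      rw [intervalIntegral.integral_sub hfint.intervalIntegrable
        hgint.intervalIntegrable, ← hFs, ← hGs]; ring
    have hbound : |(F s - G s) - (F τ - G τ)| ≤ gmax * (s - τ) := by
      rw [hdiff]
      have := intervalIntegral.norm_integral_le_of_norm_le_const
        (C := gmax) (f := fun x => f x - g x) (a := τ) (b := s) ?_
      · simpa [abs_of_nonneg (sub_nonneg.2 hs), mul_comm] using this
      · intro x _
        rw [Real.norm_eq_abs, abs_sub_le_iff]
        constructor <;> nlinarith [hf0 x, hg0 x, hfb x, hgb x]
    have : a ≤ |F s - G s| + gmax * (s - τ) := by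
      calc a = |F τ - G τ| := ha
        _ ≤ |F s - G s| + |(F s - G s) - (F τ - G τ)| := by
            have := abs_sub_abs_le_abs_sub (F τ - G τ) (F s - G s)
            have h2 := abs_sub_comm (F τ - G τ) (F s - G s)
            linarith [abs_sub_abs_le_abs_sub (F τ - G τ) (F s - G s),
              abs_sub_comm ((F τ - G τ)) ((F s - G s))]
        _ ≤ |F s - G s| + gmax * (s - τ) := by linarith
    linarith
  -- integral of the linear lower bound on [τ, τ+h]
  have hcont : Continuous (fun x : ℝ => a - gmax * (x - τ)) := by continuity
  have hmono : ∫ x in Set.Ioc τ (τ + h), (a - gmax * (x - τ))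
      ≤ ∫ x in Set.Ioc τ (τ + h), |F x - G x| := by
    apply setIntegral_mono_on
    · exact hcont.integrableOn_Ioc
    · exact hFGint.integrableOn
    · exact measurableSet_Ioc
    · intro x hx
      exact key x hx.1.le
  have hupper : ∫ x in Set.Ioc τ (τ + h), |F x - G x| ≤ W := by
    refine le_trans ?_ hL1
    apply setIntegral_le_integral hFGint
    filter_upwards with x using abs_nonneg _
  have hle : τ ≤ τ + h := by linarith
  have hcalc : ∫ x in Set.Ioc τ (τ + h), (a - gmax * (x - τ)) = a ^ 2 / (2 * gmax) := by
    rw [← intervalIntegral.integral_of_le hle]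
    have : ∀ x : ℝ, a - gmax * (x - τ) = (a + gmax * τ) - gmax * x := by intro x; ring
    simp_rw [this]
    rw [intervalIntegral.integral_sub (g := fun x : ℝ => gmax * x) intervalIntegrable_const
      ((continuous_const.mul continuous_id').intervalIntegrable _ _),
      intervalIntegral.integral_const, intervalIntegral.integral_const_mul, integral_id]
    rw [hh]
    field_simp [hgm.ne']
    linear_combination (2 * a ^ 2 + 2 * gmax * a * τ) * (mul_inv_cancel₀ hgm.ne')
  have hsq : a ^ 2 ≤ 2 * gmax * W := by
    have : a ^ 2 / (2 * gmax) ≤ W := by rw [← hcalc]; linarith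
    calc a ^ 2 = (a ^ 2 / (2 * gmax)) * (2 * gmax) := by field_simp
      _ ≤ W * (2 * gmax) := by nlinarith
      _ = 2 * gmax * W := by ring
  rw [Real.le_sqrt (abs_nonneg _) (by positivity)]
  exact hsq
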